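/- Let M_g, M_f, L_g, ε, σ, C_α, C_β, C₃ > 0 and a, b, e > 0 with b ≤ 1, (2a − 2b) ∉ [−1, 0], C_β > 1 + 2a − 2b and 2C_β > 1 + b + e. Set α_t = C_α/t^a and β_t = C_β/t^b. Suppose nonnegative real sequences (ℱ_t), (𝒟_t), (e_t) satisfy ℱ₁ = 𝒟₁ = 0, e₁ < ∞, and for all t ≥ 1: ℱ_{t+1}² ≤ (1 − β_t) ℱ_t² + (4M_g²M_f²/ε²)(α_t²/β_t); 𝒟_{t+1} ≤ (1 − β_t) 𝒟_t + (2M_g²M_f²/ε²)(α_t²/β_t) + β_t ℱ_t²; e_{t+1} ≤ (1 − β_t)² e_t + β_t² σ²/(C₃ t^e). Then there exist constants C_𝒟, C_ℰ > 0 such that for all t ≥ 1: 𝒟_t ≤ C_𝒟 / t^{2a−2b} and e_t ≤ C_ℰ / t^{b+e}; in particular any sequence (w_t) with w_t ≤ (L_g²/2) 𝒟_t² + 2 e_t satisfies w_t ≤ (L_g² C_𝒟² / 2) t^{−(4a−4b)} + 2 C_ℰ t^{−(b+e)}. -/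

import Mathlib

set_option maxHeartbeats 1000000

open Real Finset

lemma chung_aux (b c p B : ℝ) (hb : 0 < b) (hb1 : b ≤ 1) (hc : 0 < c) (hcp : p < c)
    (hB : 0 ≤ B) (x : ℕ → ℝ) (T : ℕ) (hT : 1 ≤ T)
    (hx : ∀ t : ℕ, 1 ≤ t → 0 ≤ x t)
    (hrec : ∀ t : ℕ, T ≤ t → x (t + 1) ≤ (1 - c / (t : ℝ) ^ b) * x t + B / (t : ℝ) ^ (p + b)) :
    ∃ C : ℝ, 0 < C ∧ ∀ t : ℕ, 1 ≤ t → x t ≤ C / (t : ℝ) ^ p := by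
  have hne : (Finset.Icc 1 T).Nonempty := ⟨T, by simp [hT]⟩
  set C1 : ℝ := (Finset.Icc 1 T).sup' hne (fun s => x s * (s : ℝ) ^ p) with hC1
  set C2 : ℝ := B / (c - p) + B / c + B + B * 2 ^ p + 1 with hC2
  have hcp' : 0 < c - p := by linarith
  have h2p : (0:ℝ) < 2 ^ p := rpow_pos_of_pos (by norm_num) p
  have hb0 : 0 ≤ B / (c - p) := div_nonneg hB hcp'.le
  have hb1' : 0 ≤ B / c := div_nonneg hB hc.le
  have hb2 : 0 ≤ B * 2 ^ p := mul_nonneg hB h2p.le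
  have hC2pos : 0 < C2 := by simp only [hC2]; linarith
  refine ⟨max C1 C2, lt_of_lt_of_le hC2pos (le_max_right _ _), ?_⟩
  set C : ℝ := max C1 C2 with hCdef
  have hCpos : 0 < C := lt_of_lt_of_le hC2pos (le_max_right _ _)
  have hBcp : B / (c - p) ≤ C := le_trans (by simp only [hC2]; linarith) (le_max_right _ _)
  have hBc : B / c ≤ C := le_trans (by simp only [hC2]; linarith) (le_max_right _ _)
  have hBC : B ≤ C := le_trans (by simp only [hC2]; linarith) (le_max_right _ _)
  have hB2p : B * 2 ^ p ≤ C := le_trans (by simp only [hC2]; linarith) (le_max_right _ _)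
  have hcCB : B ≤ c * C := by rw [div_le_iff₀ hc] at hBc; linarith
  have hpC : p * C ≤ c * C - B := by rw [div_le_iff₀ hcp'] at hBcp; nlinarith
  have hinit : ∀ s : ℕ, 1 ≤ s → s ≤ T → x s ≤ C / (s : ℝ) ^ p := by
    intro s hs1 hsT
    have hsp : (0:ℝ) < (s : ℝ) ^ p :=
      rpow_pos_of_pos (by exact_mod_cast Nat.lt_of_lt_of_le Nat.zero_lt_one hs1) p
    rw [le_div_iff₀ hsp]
    calc x s * (s:ℝ) ^ p ≤ C1 :=
          Finset.le_sup' (f := fun s => x s * (s : ℝ) ^ p) (by simp [hs1, hsT])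
      _ ≤ C := le_max_left _ _
  have hstep : ∀ t : ℕ, T ≤ t → x t ≤ C / (t : ℝ) ^ p → x (t + 1) ≤ C / ((t : ℝ) + 1) ^ p := by
    intro t ht IH
    have ht1 : 1 ≤ t := hT.trans ht
    set s : ℝ := (t : ℝ) with hs
    have hs1 : (1:ℝ) ≤ s := by rw [hs]; exact_mod_cast ht1
    have hs0 : (0:ℝ) < s := by linarith
    have hsb : (0:ℝ) < s ^ b := rpow_pos_of_pos hs0 b
    have hsp : (0:ℝ) < s ^ p := rpow_pos_of_pos hs0 p
    have hspb : (0:ℝ) < s ^ (p + b) := rpow_pos_of_pos hs0 (p + b)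
    have hs1p : (0:ℝ) < (s + 1) ^ p := rpow_pos_of_pos (by linarith) p
    have hadd : s ^ (p + b) = s ^ p * s ^ b := rpow_add hs0 p b
    have hsb1 : (1:ℝ) ≤ s ^ b := one_le_rpow hs1 hb.le
    have hrec' := hrec t ht
    rcases le_or_gt 0 (1 - c / s ^ b) with h1 | h1
    · -- contraction case
      have key : x (t + 1) ≤ C / s ^ p - (c * C - B) / s ^ (p + b) := by
        have hm := mul_le_mul_of_nonneg_left IH h1
        have hexpand : (1 - c / s ^ b) * (C / s ^ p) + B / s ^ (p + b)
            = C / s ^ p - (c * C - B) / s ^ (p + b) := by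
          rw [hadd]; field_simp; ring
        linarith [hrec', hexpand]
      rcases le_or_gt p 0 with hp | hp
      · have hmono : (s + 1) ^ p ≤ s ^ p := rpow_le_rpow_of_nonpos hs0 (by linarith) hp
        have h2 : C / s ^ p ≤ C / (s + 1) ^ p :=
          div_le_div_of_nonneg_left hCpos.le hs1p hmono
        have h3 : 0 ≤ (c * C - B) / s ^ (p + b) := div_nonneg (by linarith) hspb.le
        linarith
      · -- p > 0
        have hz : (0:ℝ) < s / (s + 1) := by positivity
        have hlog : -(1/s) ≤ Real.log (s / (s + 1)) := by
          have hl : Real.log ((s+1)/s) ≤ (s+1)/s - 1 := log_le_sub_one_of_pos (by positivity)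
          have heq : Real.log (s / (s+1)) = - Real.log ((s+1)/s) := by
            rw [← Real.log_inv]; congr 1; field_simp
          have h2 : (s+1)/s - 1 = 1/s := by field_simp; ring
          rw [heq]; rw [h2] at hl; linarith
        have hber : 1 - p / s ≤ (s / (s + 1)) ^ p := by
          rw [rpow_def_of_pos hz]
          have h1' : Real.log (s / (s+1)) * p + 1 ≤ Real.exp (Real.log (s / (s+1)) * p) :=
            add_one_le_exp _
          have h2' : -(p / s) ≤ Real.log (s / (s+1)) * p := by
            have hmm := mul_le_mul_of_nonneg_right hlog hp.le
            calc -(p/s) = (-(1/s)) * p := by ring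
              _ ≤ _ := hmm
          linarith
        rw [div_rpow hs0.le (by linarith)] at hber
        have h4 : C / s ^ p - p * C / (s * s ^ p) ≤ C / (s + 1) ^ p := by
          have hm := mul_le_mul_of_nonneg_left hber (div_nonneg hCpos.le hsp.le)
          have e1 : (C / s ^ p) * (s ^ p / (s+1) ^ p) = C / (s+1) ^ p := by
            field_simp
          have e2 : (C / s ^ p) * (1 - p / s) = C / s ^ p - p * C / (s * s ^ p) := by
            field_simp
          rw [e2, e1] at hm; exact hm
        have hsbs : s ^ (p + b) ≤ s * s ^ p := by
          rw [hadd, mul_comm s (s ^ p)]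
          have hh : s ^ b ≤ s := by
            calc s ^ b ≤ s ^ (1:ℝ) := rpow_le_rpow_of_exponent_le hs1 hb1
              _ = s := rpow_one s
          exact mul_le_mul_of_nonneg_left hh hsp.le
        have h5 : p * C / (s * s ^ p) ≤ p * C / s ^ (p + b) := by
          apply div_le_div_of_nonneg_left (by positivity) hspb hsbs
        have h6 : p * C / s ^ (p + b) ≤ (c * C - B) / s ^ (p + b) :=
          div_le_div_of_nonneg_right hpC hspb.le
        linarith
    · -- drop case
      have key : x (t + 1) ≤ B / s ^ (p + b) := by
        have h0 : (1 - c / s ^ b) * x t ≤ 0 := mul_nonpos_of_nonpos_of_nonneg h1.le (hx t ht1)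
        linarith
      have hppb : s ^ p ≤ s ^ (p + b) := by
        rw [hadd]
        nlinarith
      have hBspb : B / s ^ (p + b) ≤ B / s ^ p :=
        div_le_div_of_nonneg_left hB hsp hppb
      rcases le_or_gt p 0 with hp | hp
      · have hmono : (s + 1) ^ p ≤ s ^ p := rpow_le_rpow_of_nonpos hs0 (by linarith) hp
        have h2 : B / s ^ p ≤ B / (s + 1) ^ p := div_le_div_of_nonneg_left hB hs1p hmono
        have h3 : B / (s + 1) ^ p ≤ C / (s + 1) ^ p := div_le_div_of_nonneg_right hBC hs1p.le
        linarith
      · have h2s : (s + 1) ^ p ≤ 2 ^ p * s ^ p := by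
          rw [← mul_rpow (by norm_num) hs0.le]
          exact rpow_le_rpow (by linarith) (by linarith) hp.le
        have h2sp : (0:ℝ) < 2 ^ p * s ^ p := by positivity
        have e1 : B / s ^ p = B * 2 ^ p / (2 ^ p * s ^ p) := by
          rw [mul_comm B (2 ^ p), mul_div_mul_left _ _ (ne_of_gt h2p)]
        have h2' : B * 2 ^ p / (2 ^ p * s ^ p) ≤ C / (2 ^ p * s ^ p) :=
          div_le_div_of_nonneg_right hB2p h2sp.le
        have h3 : C / (2 ^ p * s ^ p) ≤ C / (s + 1) ^ p :=
          div_le_div_of_nonneg_left hCpos.le hs1p h2s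
        rw [e1] at hBspb
        linarith
  have hmain : ∀ t : ℕ, T ≤ t → x t ≤ C / (t : ℝ) ^ p := by
    intro t ht
    induction t, ht using Nat.le_induction with
    | base => exact hinit T hT le_rfl
    | succ n hn ihn =>
      have := hstep n hn ihn
      push_cast
      exact this
  intro t ht1
  rcases le_or_gt t T with h | h
  · exact hinit t ht1 h
  · exact hmain t h.le

/-- Corollary 1 of the paper in abstract form: decay rates for the dispersion
sequences `ℱ_t`, `𝒟_t` and the mean squared sampling error `e_t`, and the resulting
bound on the tracking error `w_t ≤ (L_g²/2)𝒟_t² + 2e_t`. -/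
theorem stmt_11 (Mg Mf Lg ε σ Cα Cβ C₃ a b e : ℝ)
    (hMg : 0 < Mg) (hMf : 0 < Mf) (hLg : 0 < Lg) (hε : 0 < ε) (hσ : 0 < σ)
    (hCα : 0 < Cα) (hCβ : 0 < Cβ) (hC₃ : 0 < C₃)
    (ha : 0 < a) (hb : 0 < b) (he : 0 < e) (hb1 : b ≤ 1)
    (hab : (2 * a - 2 * b) ∉ Set.Icc (-1 : ℝ) 0)
    (hCβ1 : 1 + 2 * a - 2 * b < Cβ) (hCβ2 : 1 + b + e < 2 * Cβ)
    (F D ee : ℕ → ℝ)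
    (hF : ∀ t : ℕ, 1 ≤ t → 0 ≤ F t) (hD : ∀ t : ℕ, 1 ≤ t → 0 ≤ D t)
    (hee : ∀ t : ℕ, 1 ≤ t → 0 ≤ ee t)
    (hF1 : F 1 = 0) (hD1 : D 1 = 0)
    (hFrec : ∀ t : ℕ, 1 ≤ t →
      F (t + 1) ^ 2 ≤ (1 - Cβ / (t : ℝ) ^ b) * F t ^ 2
        + (4 * Mg ^ 2 * Mf ^ 2 / ε ^ 2) * ((Cα / (t : ℝ) ^ a) ^ 2 / (Cβ / (t : ℝ) ^ b)))
    (hDrec : ∀ t : ℕ, 1 ≤ t →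
      D (t + 1) ≤ (1 - Cβ / (t : ℝ) ^ b) * D t
        + (2 * Mg ^ 2 * Mf ^ 2 / ε ^ 2) * ((Cα / (t : ℝ) ^ a) ^ 2 / (Cβ / (t : ℝ) ^ b))
        + (Cβ / (t : ℝ) ^ b) * F t ^ 2)
    (heerec : ∀ t : ℕ, 1 ≤ t →
      ee (t + 1) ≤ (1 - Cβ / (t : ℝ) ^ b) ^ 2 * ee t
        + (Cβ / (t : ℝ) ^ b) ^ 2 * σ ^ 2 / (C₃ * (t : ℝ) ^ e)) :
    ∃ CD CE : ℝ, 0 < CD ∧ 0 < CE ∧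
      (∀ t : ℕ, 1 ≤ t → D t ≤ CD / (t : ℝ) ^ (2 * a - 2 * b)) ∧
      (∀ t : ℕ, 1 ≤ t → ee t ≤ CE / (t : ℝ) ^ (b + e)) ∧
      ∀ w : ℕ → ℝ, (∀ t : ℕ, 1 ≤ t → w t ≤ (Lg ^ 2 / 2) * D t ^ 2 + 2 * ee t) →
        ∀ t : ℕ, 1 ≤ t →
          w t ≤ (Lg ^ 2 * CD ^ 2 / 2) * ((t : ℝ) ^ (4 * a - 4 * b))⁻¹
            + 2 * CE * ((t : ℝ) ^ (b + e))⁻¹ := by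
  set γ : ℝ := 2 * a - 2 * b with hγ
  set A : ℝ := 4 * Mg ^ 2 * Mf ^ 2 / ε ^ 2 with hA
  have hA0 : 0 < A := by positivity
  -- rewrite the noise term
  have hnoise : ∀ t : ℕ, 1 ≤ t →
      (Cα / (t : ℝ) ^ a) ^ 2 / (Cβ / (t : ℝ) ^ b) = (Cα ^ 2 / Cβ) / (t : ℝ) ^ (γ + b) := by
    intro t ht
    have hs0 : (0:ℝ) < (t : ℝ) := by exact_mod_cast Nat.lt_of_lt_of_le Nat.zero_lt_one ht
    have h2a : (t : ℝ) ^ (γ + b) = (t:ℝ) ^ a * (t:ℝ) ^ a / (t:ℝ) ^ b := by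
      rw [show γ + b = a + a - b by rw [hγ]; ring, rpow_sub hs0, rpow_add hs0]
    have hpa := rpow_pos_of_pos hs0 a
    have hpb := rpow_pos_of_pos hs0 b
    rw [h2a]
    field_simp
  -- Step 1: bound for F ^ 2
  set BF : ℝ := A * Cα ^ 2 / Cβ with hBF
  have hγCβ : γ < Cβ := by rw [hγ]; linarith
  obtain ⟨CF, hCF0, hCF⟩ :=
    chung_aux b Cβ γ BF hb hb1 hCβ hγCβ (by positivity) (fun t => F t ^ 2) 1 le_rfl
      (fun t ht => by positivity)
      (by
        intro t ht
        have := hFrec t ht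
        rw [hnoise t ht] at this
        have heq : A * (Cα ^ 2 / Cβ / (t:ℝ) ^ (γ + b)) = BF / (t:ℝ) ^ (γ + b) := by
          rw [hBF]; ring
        simpa [heq] using this)
  -- Step 2: bound for D
  set BD : ℝ := BF / 2 + Cβ * CF with hBD
  obtain ⟨CD, hCD0, hCD⟩ :=
    chung_aux b Cβ γ BD hb hb1 hCβ hγCβ (by positivity) D 1 le_rfl hD
      (by
        intro t ht
        have hrecD := hDrec t ht
        have hs0 : (0:ℝ) < (t : ℝ) := by exact_mod_cast Nat.lt_of_lt_of_le Nat.zero_lt_one ht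
        have hpb := rpow_pos_of_pos hs0 b
        have hpγ := rpow_pos_of_pos hs0 γ
        have hpγb := rpow_pos_of_pos hs0 (γ + b)
        rw [hnoise t ht] at hrecD
        have h1 : (A / 2) * (Cα ^ 2 / Cβ / (t:ℝ) ^ (γ + b)) = (BF / 2) / (t:ℝ) ^ (γ + b) := by
          rw [hBF]; ring
        have h2 : (Cβ / (t:ℝ) ^ b) * F t ^ 2 ≤ (Cβ * CF) / (t:ℝ) ^ (γ + b) := by
          have hFb := hCF t ht
          have hmul : (Cβ / (t:ℝ) ^ b) * (F t ^ 2) ≤ (Cβ / (t:ℝ) ^ b) * (CF / (t:ℝ) ^ γ) :=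
            mul_le_mul_of_nonneg_left hFb (by positivity)
          have heq2 : (Cβ / (t:ℝ) ^ b) * (CF / (t:ℝ) ^ γ) = (Cβ * CF) / (t:ℝ) ^ (γ + b) := by
            rw [rpow_add hs0]
            field_simp
          linarith [hmul, heq2.le, heq2.ge]
        have h3 : (2 * Mg ^ 2 * Mf ^ 2 / ε ^ 2) = A / 2 := by rw [hA]; ring
        rw [h3] at hrecD
        have h4 : BD / (t:ℝ) ^ (γ + b) = (BF / 2) / (t:ℝ) ^ (γ + b) + (Cβ * CF) / (t:ℝ) ^ (γ + b) := by
          rw [hBD]; ring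
        rw [h4]
        linarith [hrecD, h1.le, h1.ge, h2])
  -- Step 3: bound for ee
  set pe : ℝ := b + e with hpe
  have hpe2Cβ : pe < 2 * Cβ := by rw [hpe]; linarith
  set δ : ℝ := min 1 ((2 * Cβ - pe) / (2 * Cβ)) with hδ
  have hδ0 : 0 < δ := lt_min one_pos (div_pos (by linarith) (by linarith))
  have hδ1 : δ ≤ 1 := min_le_left _ _
  have hδ2 : δ ≤ (2 * Cβ - pe) / (2 * Cβ) := min_le_right _ _
  set c' : ℝ := (2 - δ) * Cβ with hc'
  have hc'0 : 0 < c' := by rw [hc']; nlinarith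
  have hc'p : pe < c' := by
    have h5 : δ * (2 * Cβ) ≤ 2 * Cβ - pe := by
      calc δ * (2 * Cβ) ≤ ((2 * Cβ - pe) / (2 * Cβ)) * (2 * Cβ) :=
            mul_le_mul_of_nonneg_right hδ2 (by positivity)
        _ = 2 * Cβ - pe := by field_simp
    rw [hc']; nlinarith [h5, hpe2Cβ]
  set T : ℕ := max 1 ⌈(Cβ / δ) ^ ((1:ℝ) / b)⌉₊ with hTdef
  have hT1 : 1 ≤ T := le_max_left _ _
  have hβsmall : ∀ t : ℕ, T ≤ t → Cβ / (t:ℝ) ^ b ≤ δ := by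
    intro t ht
    have hceil : (⌈(Cβ / δ) ^ ((1:ℝ) / b)⌉₊ : ℝ) ≤ (t : ℝ) := by
      exact_mod_cast (le_max_right 1 _).trans ht
    have hle : (Cβ / δ) ^ ((1:ℝ) / b) ≤ (t : ℝ) := (Nat.le_ceil _).trans hceil
    have hs0 : (0:ℝ) < (t:ℝ) := by
      exact_mod_cast Nat.lt_of_lt_of_le Nat.zero_lt_one (hT1.trans ht)
    have h0 : (0:ℝ) ≤ Cβ / δ := by positivity
    have hpow : Cβ / δ ≤ (t:ℝ) ^ b := by
      calc Cβ / δ = ((Cβ / δ) ^ ((1:ℝ)/b)) ^ b := by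
            rw [← rpow_mul h0, one_div, inv_mul_cancel₀ hb.ne', rpow_one]
          _ ≤ (t:ℝ) ^ b := rpow_le_rpow (rpow_nonneg h0 _) hle hb.le
    rw [div_le_iff₀ (rpow_pos_of_pos hs0 b)]
    rw [div_le_iff₀ hδ0] at hpow
    linarith [hpow]
  set Be : ℝ := Cβ ^ 2 * σ ^ 2 / C₃ with hBe
  obtain ⟨CE, hCE0, hCE⟩ :=
    chung_aux b c' pe Be hb hb1 hc'0 hc'p (by positivity) ee T hT1
      (fun t ht => hee t ht)
      (by
        intro t ht
        have ht1 : 1 ≤ t := hT1.trans ht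
        have hrecE := heerec t ht1
        have hs0 : (0:ℝ) < (t : ℝ) := by exact_mod_cast Nat.lt_of_lt_of_le Nat.zero_lt_one ht1
        have hpb := rpow_pos_of_pos hs0 b
        set β : ℝ := Cβ / (t:ℝ) ^ b with hβ
        have hβ0 : 0 < β := by positivity
        have hβδ : β ≤ δ := hβsmall t ht
        -- contraction coefficient bound
        have hcontr : (1 - β) ^ 2 ≤ 1 - c' / (t:ℝ) ^ b := by
          have h1 : c' / (t:ℝ) ^ b = 2 * β - δ * β := by rw [hc', hβ]; ring
          have h2 : β * β ≤ δ * β := mul_le_mul_of_nonneg_right hβδ hβ0.le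
          have h3 : (1 - β) ^ 2 = 1 - 2 * β + β * β := by ring
          rw [h1, h3]
          linarith [h2]
        have hterm1 : (1 - β) ^ 2 * ee t ≤ (1 - c' / (t:ℝ) ^ b) * ee t :=
          mul_le_mul_of_nonneg_right hcontr (hee t ht1)
        -- noise term
        have hterm2 : β ^ 2 * σ ^ 2 / (C₃ * (t:ℝ) ^ e) = Be / (t:ℝ) ^ (pe + b) := by
          have hsplit : (t:ℝ) ^ (pe + b) = (t:ℝ) ^ b * (t:ℝ) ^ b * (t:ℝ) ^ e := by
            rw [show pe + b = b + b + e by rw [hpe]; ring, rpow_add hs0, rpow_add hs0]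
          rw [hsplit, hβ, hBe]
          have hpe' := rpow_pos_of_pos hs0 e
          field_simp
        rw [hterm2] at hrecE
        linarith [hrecE, hterm1])
  refine ⟨CD, CE, hCD0, hCE0, hCD, hCE, ?_⟩
  intro w hw t ht
  have hs0 : (0:ℝ) < (t : ℝ) := by exact_mod_cast Nat.lt_of_lt_of_le Nat.zero_lt_one ht
  have hγ2 : ((t:ℝ) ^ γ) ^ 2 = (t:ℝ) ^ (4 * a - 4 * b) := by
    rw [sq, ← rpow_add hs0, show γ + γ = 4 * a - 4 * b by rw [hγ]; ring]
  have hDt : D t ^ 2 ≤ CD ^ 2 / (t:ℝ) ^ (4 * a - 4 * b) := by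
    have h1 : D t ^ 2 ≤ (CD / (t:ℝ) ^ γ) ^ 2 := pow_le_pow_left₀ (hD t ht) (hCD t ht) 2
    rwa [div_pow, hγ2] at h1
  have heet : ee t ≤ CE / (t:ℝ) ^ (b + e) := by
    have := hCE t ht
    rwa [hpe] at this
  have hw' := hw t ht
  have hmul1 : (Lg ^ 2 / 2) * D t ^ 2 ≤ (Lg ^ 2 / 2) * (CD ^ 2 / (t:ℝ) ^ (4 * a - 4 * b)) :=
    mul_le_mul_of_nonneg_left hDt (by positivity)
  have heq1 : (Lg ^ 2 / 2) * (CD ^ 2 / (t:ℝ) ^ (4 * a - 4 * b))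
      = (Lg ^ 2 * CD ^ 2 / 2) * ((t:ℝ) ^ (4 * a - 4 * b))⁻¹ := by
    rw [div_eq_mul_inv (CD ^ 2)]; ring
  have heq2 : 2 * (CE / (t:ℝ) ^ (b + e)) = 2 * CE * ((t:ℝ) ^ (b + e))⁻¹ := by
    rw [div_eq_mul_inv]; ring
  calc w t ≤ (Lg ^ 2 / 2) * D t ^ 2 + 2 * ee t := hw'
    _ ≤ (Lg ^ 2 / 2) * (CD ^ 2 / (t:ℝ) ^ (4 * a - 4 * b)) + 2 * (CE / (t:ℝ) ^ (b + e)) :=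
        add_le_add hmul1 (mul_le_mul_of_nonneg_left heet (by norm_num))
    _ = (Lg ^ 2 * CD ^ 2 / 2) * ((t : ℝ) ^ (4 * a - 4 * b))⁻¹
          + 2 * CE * ((t : ℝ) ^ (b + e))⁻¹ := by rw [heq1, heq2]
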